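/- For all k ∈ ℕ, the minimum point degree in the iterated point–line construction satisfies δ_{k+1} ≥ min { n_k − 1, 2δ_k − 3 }. -/

import Mathlib

noncomputable section

/-- Points of the real plane. -/
abbrev Pt := ℝ × ℝ

/-- Lines are affine subspaces of the plane (we restrict to 1-dimensional ones via `IsLine`). -/
abbrev Ln := AffineSubspace ℝ Pt

/-- A line is a 1-dimensional affine subspace of `ℝ²`. -/
def IsLine (l : Ln) : Prop := Module.finrank ℝ l.direction = 1

/-- The line through two (distinct) points. -/
def lineThrough (p q : Pt) : Ln := affineSpan ℝ {p, q}

/-- The iterated point–line construction: `P 1` is a set of four points in general position,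
`L 1` is the set of lines through pairs of them; `P (k+1)` adds all intersection points of
pairs of distinct lines of `L k`, and `L (k+1)` adds all lines through pairs of distinct
points of `P (k+1)`.  No two distinct lines of any `L k` are parallel. -/
structure IterConfig where
  P : ℕ → Set Pt
  L : ℕ → Set Ln
  card_P1 : (P 1).ncard = 4
  genPos : ∀ p ∈ P 1, ∀ q ∈ P 1, ∀ r ∈ P 1,
    p ≠ q → p ≠ r → q ≠ r → ¬ Collinear ℝ ({p, q, r} : Set Pt)
  L1_def : L 1 = {l | ∃ p ∈ P 1, ∃ q ∈ P 1, p ≠ q ∧ l = lineThrough p q}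
  P_succ : ∀ k, 1 ≤ k →
    P (k + 1) = P k ∪ {x | ∃ l ∈ L k, ∃ l' ∈ L k, l ≠ l' ∧ x ∈ l ∧ x ∈ l'}
  L_succ : ∀ k, 1 ≤ k →
    L (k + 1) = L k ∪ {l | ∃ p ∈ P (k + 1), ∃ q ∈ P (k + 1), p ≠ q ∧ l = lineThrough p q}
  noParallel : ∀ k, 1 ≤ k → ∀ l ∈ L k, ∀ l' ∈ L k, l ≠ l' →
    AffineSubspace.direction l ≠ AffineSubspace.direction l'

/-- `n k`, the number of points at the beginning of stage `k`. -/
def nPts (C : IterConfig) (k : ℕ) : ℕ := (C.P k).ncard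

/-- `m k`, the number of lines at the beginning of stage `k`. -/
def nLns (C : IterConfig) (k : ℕ) : ℕ := (C.L k).ncard

/-- `d k p`, the degree of a point: the number of lines of `L k` incident to `p`. -/
def ptDeg (C : IterConfig) (k : ℕ) (p : Pt) : ℕ := {l | l ∈ C.L k ∧ p ∈ l}.ncard

/-- `δ k`, the minimum degree of a point of `P k`. -/
def minDeg (C : IterConfig) (k : ℕ) : ℕ := sInf {d | ∃ p ∈ C.P k, d = ptDeg C k p}

/-! ### Auxiliary lemmas -/

open scoped Pointwise

namespace StmtAux

lemma lt_left (p q : Pt) : p ∈ lineThrough p q := left_mem_affineSpan_pair ℝ p q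
lemma lt_right (p q : Pt) : q ∈ lineThrough p q := right_mem_affineSpan_pair ℝ p q

lemma dir_lt (p q : Pt) : (lineThrough p q).direction = Submodule.span ℝ {q - p} := by
  rw [lineThrough, direction_affineSpan, vectorSpan_pair_rev, vsub_eq_sub]

lemma mem_lt_iff {p q x : Pt} : x ∈ lineThrough p q ↔ ∃ t : ℝ, x - p = t • (q - p) := by
  rw [← AffineSubspace.vsub_right_mem_direction_iff_mem (lt_left p q) x, dir_lt,
    Submodule.mem_span_singleton, vsub_eq_sub]
  exact ⟨fun ⟨t, ht⟩ => ⟨t, ht.symm⟩, fun ⟨t, ht⟩ => ⟨t, ht.symm⟩⟩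

lemma indep2 {v : Pt} (hv : v ≠ 0) {a b : ℝ}
    (h : a • v + b • ((-v.2, v.1) : Pt) = 0) : a = 0 ∧ b = 0 := by
  have h1 : a * v.1 + b * (-v.2) = 0 := congrArg Prod.fst h
  have h2 : a * v.2 + b * v.1 = 0 := congrArg Prod.snd h
  have hvv : v.1 ^ 2 + v.2 ^ 2 ≠ 0 := by
    intro hz
    apply hv
    have h1 : v.1 = 0 := by nlinarith [sq_nonneg v.1, sq_nonneg v.2]
    have h2 : v.2 = 0 := by nlinarith [sq_nonneg v.1, sq_nonneg v.2]
    exact Prod.ext h1 h2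
  constructor
  · have h3 : a * (v.1 ^ 2 + v.2 ^ 2) = 0 := by linear_combination v.1 * h1 + v.2 * h2
    rcases mul_eq_zero.mp h3 with h | h
    · exact h
    · exact absurd h hvv
  · have h3 : b * (v.1 ^ 2 + v.2 ^ 2) = 0 := by linear_combination v.1 * h2 - v.2 * h1
    rcases mul_eq_zero.mp h3 with h | h
    · exact h
    · exact absurd h hvv

lemma span_smul_ne {c : ℝ} (hc : c ≠ 0) (w : Pt) :
    Submodule.span ℝ {c • w} = Submodule.span ℝ {w} :=
  Submodule.span_singleton_smul_eq (IsUnit.mk0 c hc) w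

lemma spanparam_inj {v : Pt} (hv : v ≠ 0) {a b : ℝ}
    (h : Submodule.span ℝ {a • v + ((-v.2, v.1) : Pt)} =
      Submodule.span ℝ {b • v + ((-v.2, v.1) : Pt)}) : a = b := by
  set e : Pt := (-v.2, v.1) with he
  have hm : a • v + e ∈ Submodule.span ℝ {b • v + e} := by
    rw [← h]; exact Submodule.mem_span_singleton_self _
  obtain ⟨c, hc⟩ := Submodule.mem_span_singleton.mp hm
  have h0 : (c * b - a) • v + (c - 1) • e = 0 := by
    have : c • (b • v + e) - (a • v + e) = 0 := sub_eq_zero.mpr hc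
    rw [← this]; module
  obtain ⟨h1, h2⟩ := indep2 hv h0
  have hc1 : c = 1 := by linarith
  rw [hc1] at h1; linarith

open Classical in
/-- Parameter of a line: its direction is `span {a • v + e}` where `e = (-v.2, v.1)`. -/
def linePar (v : Pt) (m : Ln) : ℝ :=
  if h : ∃ a : ℝ, m.direction = Submodule.span ℝ {a • v + ((-v.2, v.1) : Pt)} then h.choose
  else 0

lemma linePar_spec {v : Pt} (hv : v ≠ 0) {m : Ln} {a : ℝ}
    (h : m.direction = Submodule.span ℝ {a • v + ((-v.2, v.1) : Pt)}) : linePar v m = a := by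
  have hex : ∃ b : ℝ, m.direction = Submodule.span ℝ {b • v + ((-v.2, v.1) : Pt)} := ⟨a, h⟩
  rw [linePar, dif_pos hex]
  exact spanparam_inj hv ((hex.choose_spec.symm.trans h))

lemma sumset_ncard {A B : Set ℝ} (hA : A.Finite) (hB : B.Finite)
    (h0 : A.Nonempty) (h1 : B.Nonempty) : A.ncard + B.ncard ≤ (A + B).ncard + 1 := by
  classical
  have hAB : (A + B).Finite := hA.add hB
  have hfe : hA.toFinset + hB.toFinset = hAB.toFinset := by
    ext z
    simp only [Finset.mem_add, Set.Finite.mem_toFinset, Set.mem_add]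
  have h0' : hA.toFinset.Nonempty := by
    rwa [Set.Finite.toFinset_nonempty]
  have h1' : hB.toFinset.Nonempty := by
    rwa [Set.Finite.toFinset_nonempty]
  have key := cauchy_davenport_add_of_linearOrder_isCancelAdd h0' h1'
  rw [hfe] at key
  rw [Set.ncard_eq_toFinset_card A hA, Set.ncard_eq_toFinset_card B hB,
    Set.ncard_eq_toFinset_card (A + B) hAB]
  omega

variable (C : IterConfig)

lemma pairs_mem : ∀ j, 1 ≤ j → ∀ p ∈ C.P j, ∀ q ∈ C.P j, p ≠ q → lineThrough p q ∈ C.L j := by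
  intro j hj p hp q hq hpq
  match j, hj with
  | 1, _ => rw [C.L1_def]; exact ⟨p, hp, q, hq, hpq, rfl⟩
  | (i+2), _ =>
    rw [C.L_succ (i+1) (by omega)]
    exact Or.inr ⟨p, hp, q, hq, hpq, rfl⟩

lemma lines_rep : ∀ j, 1 ≤ j → ∀ m ∈ C.L j, ∃ x y : Pt, x ≠ y ∧ m = lineThrough x y := by
  intro j hj
  induction j, hj using Nat.le_induction with
  | base =>
    intro m hm
    rw [C.L1_def] at hm
    obtain ⟨p, hp, q, hq, hpq, rfl⟩ := hm
    exact ⟨p, q, hpq, rfl⟩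
  | succ i hi ih =>
    intro m hm
    rw [C.L_succ i hi] at hm
    rcases hm with hm | ⟨p, hp, q, hq, hpq, rfl⟩
    · exact ih m hm
    · exact ⟨p, q, hpq, rfl⟩

lemma dir_of_two_mem {j : ℕ} (hj : 1 ≤ j) {m : Ln} (hm : m ∈ C.L j) {x y : Pt}
    (hxy : x ≠ y) (hx : x ∈ m) (hy : y ∈ m) : m.direction = Submodule.span ℝ {y - x} := by
  obtain ⟨u, w, huw, rfl⟩ := lines_rep C j hj m hm
  rw [dir_lt]
  have hmem : y - x ∈ Submodule.span ℝ {w - u} := by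
    have := AffineSubspace.vsub_mem_direction hy hx
    rwa [vsub_eq_sub, dir_lt] at this
  obtain ⟨t, ht⟩ := Submodule.mem_span_singleton.mp hmem
  have ht0 : t ≠ 0 := by
    intro h
    apply hxy
    have : y - x = 0 := by rw [← ht, h, zero_smul]
    exact (sub_eq_zero.mp this).symm
  rw [← ht, span_smul_ne ht0]

lemma two_mem_eq {j : ℕ} (hj : 1 ≤ j) {m m' : Ln} (hm : m ∈ C.L j) (hm' : m' ∈ C.L j)
    {x y : Pt} (hxy : x ≠ y) (hx : x ∈ m) (hy : y ∈ m) (hx' : x ∈ m') (hy' : y ∈ m') :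
    m = m' := by
  by_contra hne
  exact C.noParallel j hj m hm m' hm' hne
    ((dir_of_two_mem C hj hm hxy hx hy).trans (dir_of_two_mem C hj hm' hxy hx' hy').symm)

lemma fin : ∀ j, 1 ≤ j → (C.P j).Finite ∧ (C.L j).Finite := by
  intro j hj
  induction j, hj using Nat.le_induction with
  | base =>
    have hP : (C.P 1).Finite := by
      by_contra h
      have : (C.P 1).Infinite := h
      have := this.ncard
      rw [C.card_P1] at this
      omega
    refine ⟨hP, ?_⟩
    have hsub : C.L 1 ⊆ Set.image2 lineThrough (C.P 1) (C.P 1) := by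
      rw [C.L1_def]
      rintro l ⟨p, hp, q, hq, _, rfl⟩
      exact Set.mem_image2_of_mem hp hq
    exact (hP.image2 lineThrough hP).subset hsub
  | succ i hi ih =>
    obtain ⟨hPf, hLf⟩ := ih
    have hPf' : (C.P (i + 1)).Finite := by
      rw [C.P_succ i hi]
      refine hPf.union ?_
      have hsub : {x : Pt | ∃ l ∈ C.L i, ∃ l' ∈ C.L i, l ≠ l' ∧ x ∈ l ∧ x ∈ l'} ⊆
          ⋃ l ∈ C.L i, ⋃ l' ∈ C.L i, {x : Pt | l ≠ l' ∧ x ∈ l ∧ x ∈ l'} := by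
        rintro x ⟨l, hl, l', hl', hne, hx, hx'⟩
        simp only [Set.mem_iUnion]
        exact ⟨l, hl, l', hl', hne, hx, hx'⟩
      refine Set.Finite.subset ?_ hsub
      refine Set.Finite.biUnion hLf fun l hl => Set.Finite.biUnion hLf fun l' hl' => ?_
      refine Set.Subsingleton.finite ?_
      intro x hx y hy
      by_contra hxy
      exact hx.1 (two_mem_eq C hi hl hl' hxy hx.2.1 hy.2.1 hx.2.2 hy.2.2)
    refine ⟨hPf', ?_⟩
    rw [C.L_succ i hi]
    refine hLf.union ?_
    have hsub : {l : Ln | ∃ p ∈ C.P (i+1), ∃ q ∈ C.P (i+1), p ≠ q ∧ l = lineThrough p q} ⊆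
        Set.image2 lineThrough (C.P (i+1)) (C.P (i+1)) := by
      rintro l ⟨p, hp, q, hq, _, rfl⟩
      exact Set.mem_image2_of_mem hp hq
    exact (hPf'.image2 lineThrough hPf').subset hsub

lemma Pne : ∀ j, 1 ≤ j → (C.P j).Nonempty := by
  intro j hj
  induction j, hj using Nat.le_induction with
  | base =>
    apply Set.nonempty_of_ncard_ne_zero
    rw [C.card_P1]; omega
  | succ i hi ih =>
    rw [C.P_succ i hi]
    exact ih.mono Set.subset_union_left

end StmtAux

/-- `δ (k+1) ≥ min (n k - 1) (2 * δ k - 3)`. -/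
theorem stmt_6 (C : IterConfig) (k : ℕ) (hk : 1 ≤ k) :
    min ((nPts C k : ℤ) - 1) (2 * (minDeg C k : ℤ) - 3) ≤ (minDeg C (k + 1) : ℤ) := by
  classical
  open StmtAux in
  have hk1 : 1 ≤ k + 1 := by omega
  have hPkfin : (C.P k).Finite := (StmtAux.fin C k hk).1
  have hLk1fin : (C.L (k+1)).Finite := (StmtAux.fin C (k+1) hk1).2
  -- the key pointwise degree bound
  have key : ∀ p ∈ C.P (k + 1),
      min ((nPts C k : ℤ) - 1) (2 * (minDeg C k : ℤ) - 3) ≤ (ptDeg C (k + 1) p : ℤ) := by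
    intro p hp
    set S : Set Ln := {n | n ∈ C.L (k + 1) ∧ p ∈ n} with hSdef
    have hSfin : S.Finite := hLk1fin.subset (fun n hn => hn.1)
    have hptdeg : ptDeg C (k + 1) p = S.ncard := rfl
    by_cases hcol : ∃ q ∈ C.P k, ∃ r ∈ C.P k, q ≠ r ∧ q ≠ p ∧ r ≠ p ∧ p ∈ lineThrough q r
    · -- sumset case:  2δ - 3 ≤ deg p
      refine le_trans (min_le_right _ _) ?_
      obtain ⟨q, hq, r, hr, hqr, hqp, hrp, hpl⟩ := hcol
      by_cases hδ : minDeg C k ≤ 1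
      · have h0 : (0:ℤ) ≤ (ptDeg C (k+1) p : ℤ) := by positivity
        omega
      push_neg at hδ
      have hδ2 : 2 ≤ minDeg C k := hδ
      set v : Pt := r - q with hvdef
      have hv : v ≠ 0 := sub_ne_zero.mpr (Ne.symm hqr)
      set e : Pt := ((-v.2, v.1) : Pt) with hedef
      set l : Ln := lineThrough q r with hldef
      have hlL : l ∈ C.L k := StmtAux.pairs_mem C k hk q hq r hr hqr
      have hdl : l.direction = Submodule.span ℝ {v} := StmtAux.dir_lt q r
      obtain ⟨τ, hτ⟩ := StmtAux.mem_lt_iff.mp hpl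
      have hτ0 : τ ≠ 0 := by
        intro h; rw [h, zero_smul] at hτ; exact hqp (sub_eq_zero.mp hτ).symm
      have hτ1 : τ ≠ 1 := by
        intro h; rw [h, one_smul] at hτ
        exact hrp (sub_left_inj.mp hτ).symm
      -- parametrization of the lines of `L k` through a point of `l`, other than `l`
      have param : ∀ z : Pt, z ∈ l → ∀ m, m ∈ C.L k → z ∈ m → m ≠ l →
          m.direction = Submodule.span ℝ {(StmtAux.linePar v m) • v + e} := by
        intro z hz m hm hzm hml
        obtain ⟨x, y, hxy, hrep⟩ := StmtAux.lines_rep C k hk m hm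
        have hd : m.direction = Submodule.span ℝ {y - x} := by
          rw [hrep]; exact StmtAux.dir_lt x y
        set w : Pt := y - x with hwdef
        have hw0 : w ≠ 0 := sub_ne_zero.mpr (Ne.symm hxy)
        have hvv : v.1 ^ 2 + v.2 ^ 2 ≠ 0 := by
          intro hz0
          apply hv
          have h1 : v.1 = 0 := by nlinarith [sq_nonneg v.1, sq_nonneg v.2]
          have h2 : v.2 = 0 := by nlinarith [sq_nonneg v.1, sq_nonneg v.2]
          exact Prod.ext h1 h2
        set α : ℝ := (w.1 * v.1 + w.2 * v.2) / (v.1 ^ 2 + v.2 ^ 2) with hα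
        set β : ℝ := (w.2 * v.1 - w.1 * v.2) / (v.1 ^ 2 + v.2 ^ 2) with hβ
        have hdecomp : w = α • v + β • e := by
          apply Prod.ext
          · show w.1 = α * v.1 + β * (-v.2)
            rw [hα, hβ]; field_simp; ring
          · show w.2 = α * v.2 + β * v.1
            rw [hα, hβ]; field_simp; ring
        by_cases hb : β = 0
        · exfalso
          rw [hb, zero_smul, add_zero] at hdecomp
          have ha : α ≠ 0 := by
            intro h; rw [h, zero_smul] at hdecomp; exact hw0 hdecomp
          have hdm : m.direction = Submodule.span ℝ {v} := by
            rw [hd, hdecomp]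
            exact StmtAux.span_smul_ne ha v
          exact hml (AffineSubspace.ext_of_direction_eq (hdm.trans hdl.symm) ⟨z, hzm, hz⟩)
        · have hba : β * (α / β) = α := by field_simp
          have hspan : m.direction = Submodule.span ℝ {(α / β) • v + e} := by
            rw [hd]
            have hw2 : w = β • ((α / β) • v + e) := by
              rw [smul_add, smul_smul, hba]; exact hdecomp
            rw [hw2, StmtAux.span_smul_ne hb]
          rw [StmtAux.linePar_spec hv hspan]
          exact hspan
      -- degrees of q and r
      have hdegq : minDeg C k ≤ ptDeg C k q := Nat.sInf_le ⟨q, hq, rfl⟩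
      have hdegr : minDeg C k ≤ ptDeg C k r := Nat.sInf_le ⟨r, hr, rfl⟩
      set Mq : Set Ln := {m | m ∈ C.L k ∧ q ∈ m} \ {l} with hMqdef
      set Mr : Set Ln := {m | m ∈ C.L k ∧ r ∈ m} \ {l} with hMrdef
      have hLkfin : (C.L k).Finite := (StmtAux.fin C k hk).2
      have hQfin : {m | m ∈ C.L k ∧ q ∈ m}.Finite := hLkfin.subset fun m hm => hm.1
      have hRfin : {m | m ∈ C.L k ∧ r ∈ m}.Finite := hLkfin.subset fun m hm => hm.1
      have hMqfin : Mq.Finite := hQfin.subset Set.diff_subset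
      have hMrfin : Mr.Finite := hRfin.subset Set.diff_subset
      have hMqcard : Mq.ncard = ptDeg C k q - 1 :=
        Set.ncard_diff_singleton_of_mem (s := {m | m ∈ C.L k ∧ q ∈ m}) ⟨hlL, StmtAux.lt_left q r⟩
      have hMrcard : Mr.ncard = ptDeg C k r - 1 :=
        Set.ncard_diff_singleton_of_mem (s := {m | m ∈ C.L k ∧ r ∈ m}) ⟨hlL, StmtAux.lt_right q r⟩
      -- the grid construction
      have grid : ∀ m ∈ Mq, ∀ m' ∈ Mr, ∃ n ∈ S,
          StmtAux.linePar v n = (1 - τ) * StmtAux.linePar v m + τ * StmtAux.linePar v m' := by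
        intro m hm m' hm'
        obtain ⟨⟨hmL, hqm⟩, hml⟩ := hm
        obtain ⟨⟨hm'L, hrm'⟩, hm'l⟩ := hm'
        have hda := param q (StmtAux.lt_left q r) m hmL hqm hml
        have hdb := param r (StmtAux.lt_right q r) m' hm'L hrm' hm'l
        set a : ℝ := StmtAux.linePar v m with hadef
        set b : ℝ := StmtAux.linePar v m' with hbdef
        have hmm' : m ≠ m' := by
          intro hEq
          have hvd : v ∈ m.direction := by
            have h' := AffineSubspace.vsub_mem_direction (hEq ▸ hrm') hqm
            rwa [vsub_eq_sub] at h'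
          rw [hda, Submodule.mem_span_singleton] at hvd
          obtain ⟨c, hc⟩ := hvd
          have h0 : (c * a - 1) • v + c • e = 0 := by
            have hsub : c • (a • v + e) - v = 0 := sub_eq_zero.mpr hc
            rw [← hsub]; module
          obtain ⟨h1, h2⟩ := StmtAux.indep2 hv h0
          rw [h2, zero_mul] at h1; norm_num at h1
        have hab : a ≠ b := by
          intro h
          exact C.noParallel k hk m hmL m' hm'L hmm' (by rw [hda, hdb, h])
        have hab' : a - b ≠ 0 := sub_ne_zero.mpr hab
        set x : Pt := (1 / (a - b)) • (a • v + e) + q with hxdef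
        have hxm : x ∈ m := by
          rw [← AffineSubspace.vsub_right_mem_direction_iff_mem hqm x, vsub_eq_sub, hda,
            Submodule.mem_span_singleton]
          exact ⟨1 / (a - b), by rw [hxdef]; abel⟩
        have hrqv : r = q + v := by rw [hvdef]; abel
        have hxm' : x ∈ m' := by
          rw [← AffineSubspace.vsub_right_mem_direction_iff_mem hrm' x, vsub_eq_sub, hdb,
            Submodule.mem_span_singleton]
          refine ⟨1 / (a - b), ?_⟩
          rw [hxdef, hrqv]
          match_scalars <;> (field_simp; try ring)
        have hxP : x ∈ C.P (k + 1) := by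
          rw [C.P_succ k hk]; exact Or.inr ⟨m, hmL, m', hm'L, hmm', hxm, hxm'⟩
        have hpq : p = τ • v + q := by
          have : p - q = τ • v := hτ
          rw [← this]; abel
        have hxpe : x - p = (1 / (a - b)) • (((1 - τ) * a + τ * b) • v + e) := by
          rw [hxdef, hpq]
          match_scalars <;> (field_simp; try ring)
        have hxp : x ≠ p := by
          intro h
          rw [h, sub_self] at hxpe
          have h0 : ((1 - τ) * a + τ * b) • v + e = 0 := by
            rcases smul_eq_zero.mp hxpe.symm with h' | h'
            · exact absurd h' (one_div_ne_zero hab')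
            · exact h'
          have h1 : ((1 - τ) * a + τ * b) • v + (1 : ℝ) • e = 0 := by
            rw [one_smul]; exact h0
          exact one_ne_zero (StmtAux.indep2 hv h1).2
        refine ⟨lineThrough p x, ⟨?_, StmtAux.lt_left p x⟩, ?_⟩
        · rw [C.L_succ k hk]
          exact Or.inr ⟨p, hp, x, hxP, Ne.symm hxp, rfl⟩
        · have hdn : (lineThrough p x).direction =
              Submodule.span ℝ {((1 - τ) * a + τ * b) • v + e} := by
            rw [StmtAux.dir_lt, hxpe]
            exact StmtAux.span_smul_ne (one_div_ne_zero hab') _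
          exact StmtAux.linePar_spec hv hdn
      -- counting
      have h1τ : (1 : ℝ) - τ ≠ 0 := sub_ne_zero.mpr (Ne.symm hτ1)
      have hinjq : Set.InjOn (fun m => (1 - τ) * StmtAux.linePar v m) Mq := by
        intro m hm m2 hm2 hEq
        simp only at hEq
        have hda := param q (StmtAux.lt_left q r) m hm.1.1 hm.1.2 hm.2
        have hda2 := param q (StmtAux.lt_left q r) m2 hm2.1.1 hm2.1.2 hm2.2
        have hpar : StmtAux.linePar v m = StmtAux.linePar v m2 := mul_left_cancel₀ h1τ hEq
        exact AffineSubspace.ext_of_direction_eq (by rw [hda, hda2, hpar]) ⟨q, hm.1.2, hm2.1.2⟩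
      have hinjr : Set.InjOn (fun m => τ * StmtAux.linePar v m) Mr := by
        intro m hm m2 hm2 hEq
        simp only at hEq
        have hda := param r (StmtAux.lt_right q r) m hm.1.1 hm.1.2 hm.2
        have hda2 := param r (StmtAux.lt_right q r) m2 hm2.1.1 hm2.1.2 hm2.2
        have hpar : StmtAux.linePar v m = StmtAux.linePar v m2 := mul_left_cancel₀ hτ0 hEq
        exact AffineSubspace.ext_of_direction_eq (by rw [hda, hda2, hpar]) ⟨r, hm.1.2, hm2.1.2⟩
      set A : Set ℝ := (fun m => (1 - τ) * StmtAux.linePar v m) '' Mq with hAdef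
      set B : Set ℝ := (fun m => τ * StmtAux.linePar v m) '' Mr with hBdef
      have hAcard : A.ncard = Mq.ncard := Set.ncard_image_of_injOn hinjq
      have hBcard : B.ncard = Mr.ncard := Set.ncard_image_of_injOn hinjr
      have hAfin : A.Finite := hMqfin.image _
      have hBfin : B.Finite := hMrfin.image _
      have hq2 : 2 ≤ ptDeg C k q := le_trans hδ2 hdegq
      have hr2 : 2 ≤ ptDeg C k r := le_trans hδ2 hdegr
      have hAne : A.Nonempty := by
        apply Set.nonempty_of_ncard_ne_zero; rw [hAcard, hMqcard]; omega
      have hBne : B.Nonempty := by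
        apply Set.nonempty_of_ncard_ne_zero; rw [hBcard, hMrcard]; omega
      have hsum := StmtAux.sumset_ncard hAfin hBfin hAne hBne
      have hABsub : A + B ⊆ (StmtAux.linePar v) '' S := by
        rintro z hz
        rw [Set.mem_add] at hz
        obtain ⟨x1, hx1, y1, hy1, rfl⟩ := hz
        obtain ⟨m, hm, rfl⟩ := hx1
        obtain ⟨m', hm', rfl⟩ := hy1
        obtain ⟨n, hnS, hn⟩ := grid m hm m' hm'
        exact ⟨n, hnS, hn⟩
      have hc1 : (A + B).ncard ≤ ((StmtAux.linePar v) '' S).ncard :=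
        Set.ncard_le_ncard hABsub (hSfin.image _)
      have hc2 : ((StmtAux.linePar v) '' S).ncard ≤ S.ncard := Set.ncard_image_le hSfin
      rw [hptdeg]
      omega
    · -- generic case:  n_k - 1 ≤ deg p
      refine le_trans (min_le_left _ _) ?_
      have hmaps : ∀ s ∈ C.P k \ {p}, lineThrough p s ∈ S := by
        intro s hs
        constructor
        · rw [C.L_succ k hk]
          refine Or.inr ⟨p, hp, s, ?_, fun h => hs.2 h.symm, rfl⟩
          rw [C.P_succ k hk]; exact Or.inl hs.1
        · exact StmtAux.lt_left p s
      have hinj : Set.InjOn (fun s => lineThrough p s) (C.P k \ {p}) := by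
        intro s hs s' hs' hss
        by_contra hne
        apply hcol
        refine ⟨s, hs.1, s', hs'.1, hne, fun h => hs.2 h, fun h => hs'.2 h, ?_⟩
        simp only at hss
        have h1 : s' ∈ lineThrough p s := by rw [hss]; exact StmtAux.lt_right p s'
        obtain ⟨μ, hμ⟩ := StmtAux.mem_lt_iff.mp h1
        have hμ1 : μ ≠ 1 := by
          intro h
          rw [h, one_smul] at hμ
          exact hne (sub_left_inj.mp hμ).symm
        rw [StmtAux.mem_lt_iff]
        refine ⟨-1 / (μ - 1), ?_⟩
        have hs's : s' - s = (μ - 1) • (s - p) := by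
          have : s' - s = (s' - p) - (s - p) := by abel
          rw [this, hμ, sub_smul, one_smul]
        rw [hs's, smul_smul]
        have : -1 / (μ - 1) * (μ - 1) = -1 := by
          rw [div_mul_cancel₀]
          exact sub_ne_zero.mpr hμ1
        rw [this, neg_one_smul, neg_sub]
      have h1 : (C.P k \ {p}).ncard ≤ S.ncard :=
        Set.ncard_le_ncard_of_injOn _ hmaps hinj hSfin
      have h2 : (nPts C k : ℤ) - 1 ≤ ((C.P k \ {p}).ncard : ℤ) := by
        by_cases hpk : p ∈ C.P k
        · rw [Set.ncard_diff_singleton_of_mem hpk]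
          have h3 : 1 ≤ (C.P k).ncard := (Set.ncard_pos hPkfin).mpr ⟨p, hpk⟩
          unfold nPts
          omega
        · rw [Set.diff_singleton_eq_self hpk]
          unfold nPts
          omega
      rw [hptdeg]
      calc (nPts C k : ℤ) - 1 ≤ ((C.P k \ {p}).ncard : ℤ) := h2
        _ ≤ (S.ncard : ℤ) := by exact_mod_cast h1
  -- conclude
  have hPne : (C.P (k + 1)).Nonempty := StmtAux.Pne C (k + 1) hk1
  obtain ⟨p0, hp0⟩ := hPne
  have hne : {d | ∃ p ∈ C.P (k + 1), d = ptDeg C (k + 1) p}.Nonempty :=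
    ⟨ptDeg C (k + 1) p0, p0, hp0, rfl⟩
  obtain ⟨p, hpP, hpe⟩ := Nat.sInf_mem hne
  have : minDeg C (k + 1) = ptDeg C (k + 1) p := hpe
  rw [this]
  exact key p hpP
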